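/- There exists a constant α > 0 such that for all constants γ > 0 and K > 0 there exists a constant C > 0 (depending only on γ and K) with the following property, for every real p > 1 and scalar Θ > 0: let {X_{i,j}}_{i ∈ [m], j ∈ [n]} be independent random variables taking values in [0, αΘ], let S_i := Σ_j X_{i,j}, and X̃_{i,j} := X_{i,j}/44. Suppose: (1) there exists a sequence v̄_1, …, v̄_m of reals with v̄_i ≥ (1/α)^p for all i, such that for each i either Σ_j min{1, ν_{Θ/v̄_i^{1/p}, p}(X̃_{i,j})} ≤ 10 or v̄_i = (1/α)^p, and Σ_i 1/v̄_i ≤ 5; (2) Σ_{i,j} E X_{i,j}^p ≤ (K·Θ)^p; (3) there exists a sequence ℓ̄_1, …, ℓ̄_m of integers in {1, …, m} such that Σ_j β_{ℓ̄_i}(X_{i,j}/Θ) ≤ γ for all i, and for each ℓ ∈ {1, …, m} at most ℓ of the indices i have ℓ̄_i = ℓ. Then E (Σ_i S_i^p)^{1/p} ≤ C·Θ. -/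

import Mathlib

open MeasureTheory ProbabilityTheory

/-- The L-function of Latała: `ν_{ε,p}(X) = (1/p) · ln E (1 + X/ε)^p`. -/
noncomputable def nu {Ω : Type*} [MeasurableSpace Ω] (μ : Measure Ω) (p ε : ℝ) (X : Ω → ℝ) : ℝ :=
  (1 / p) * Real.log (∫ ω, (1 + X ω / ε) ^ p ∂μ)

/-- The effective size `β_ℓ(X) = (1/ln ℓ) · ln E e^{X ln ℓ}` for `ℓ > 1`, and `β_1(X) = E X`. -/
noncomputable def effSize {Ω : Type*} [MeasurableSpace Ω] (μ : Measure Ω) (ℓ : ℝ) (X : Ω → ℝ) :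
    ℝ :=
  if 1 < ℓ then (1 / Real.log ℓ) * Real.log (∫ ω, Real.exp (X ω * Real.log ℓ) ∂μ)
  else ∫ ω, X ω ∂μ

section StmtHelpers


variable {Ω : Type*} [MeasurableSpace Ω] {μ : Measure Ω}

lemma meas_rpow {f : Ω → ℝ} {c : ℝ} (hf : Measurable f) (hc : 0 ≤ c) :
    Measurable fun ω => f ω ^ c :=
  (Real.continuous_rpow_const hc).measurable.comp hf

lemma bdd_integrable [IsFiniteMeasure μ] {f : Ω → ℝ} {M : ℝ}
    (hmeas : Measurable f) (h0 : ∀ ω, 0 ≤ f ω) (h1 : ∀ ω, f ω ≤ M) : Integrable f μ :=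
  ⟨hmeas.aestronglyMeasurable,
    HasFiniteIntegral.of_bounded (C := M)
      (ae_of_all _ fun ω => by rw [Real.norm_eq_abs, abs_of_nonneg (h0 ω)]; exact h1 ω)⟩

lemma sum_le_prod_one_add {ι : Type*} (s : Finset ι) (f : ι → ℝ) (h : ∀ j ∈ s, 0 ≤ f j) :
    ∑ j ∈ s, f j ≤ ∏ j ∈ s, (1 + f j) := by
  classical
  induction s using Finset.induction_on with
  | empty => simp
  | @insert a s ha ih =>
    have hfa : 0 ≤ f a := h a (Finset.mem_insert_self a s)
    have h' : ∀ j ∈ s, 0 ≤ f j := fun j hj => h j (Finset.mem_insert_of_mem hj)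
    have hP : (1:ℝ) ≤ ∏ j ∈ s, (1 + f j) := by
      have h2 := Finset.prod_le_prod (s := s) (f := fun _ => (1:ℝ)) (g := fun j => 1 + f j)
        (fun j hj => zero_le_one) (fun j hj => by linarith [h' j hj])
      simpa using h2
    have hsum := ih h'
    rw [Finset.sum_insert ha, Finset.prod_insert ha]
    nlinarith

lemma integral_prod_of_indep [IsProbabilityMeasure μ] {ι : Type*} {Y : ι → Ω → ℝ} {M : ι → ℝ}
    (hmeas : ∀ k, Measurable (Y k)) (h0 : ∀ k ω, 0 ≤ Y k ω) (h1 : ∀ k ω, Y k ω ≤ M k)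
    (hind : iIndepFun Y μ) (s : Finset ι) :
    ∫ ω, ∏ k ∈ s, Y k ω ∂μ = ∏ k ∈ s, ∫ ω, Y k ω ∂μ := by
  classical
  have hintP : ∀ t : Finset ι, Integrable (fun ω => ∏ k ∈ t, Y k ω) μ := by
    intro t
    refine bdd_integrable (Finset.measurable_prod t fun k _ => hmeas k)
      (fun ω => Finset.prod_nonneg fun k _ => h0 k ω)
      (M := ∏ k ∈ t, M k) (fun ω => Finset.prod_le_prod (fun k _ => h0 k ω) fun k _ => h1 k ω)
  induction s using Finset.induction_on with
  | empty => simp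
  | @insert a s ha ih =>
    have hIndep : IndepFun (∏ j ∈ s, Y j) (Y a) μ :=
      hind.indepFun_finset_prod_of_notMem hmeas ha
    have hPeq : (∏ j ∈ s, Y j) = fun ω => ∏ k ∈ s, Y k ω := by
      funext ω; simp [Finset.prod_apply]
    have hmul := hIndep.symm.integral_mul_eq_mul_integral
      (bdd_integrable (hmeas a) (h0 a) (h1 a)).aestronglyMeasurable
      (by rw [hPeq]; exact (hintP s).aestronglyMeasurable)
    have heq : (fun ω => ∏ k ∈ insert a s, Y k ω) = (Y a) * (∏ j ∈ s, Y j) := by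
      funext ω
      simp [Finset.prod_insert ha, Finset.prod_apply]
    calc ∫ ω, ∏ k ∈ insert a s, Y k ω ∂μ
        = ∫ ω, ((Y a) * (∏ j ∈ s, Y j)) ω ∂μ := by rw [heq]
      _ = (∫ ω, Y a ω ∂μ) * ∫ ω, (∏ j ∈ s, Y j) ω ∂μ := hmul
      _ = ∏ k ∈ insert a s, ∫ ω, Y k ω ∂μ := by
          rw [Finset.prod_insert ha, ← ih]
          congr 1
          refine integral_congr_ae (ae_of_all _ fun ω => ?_)
          simp [Finset.prod_apply]

lemma real_rpow_add_le {a b q : ℝ} (ha : 0 ≤ a) (hb : 0 ≤ b) (hq0 : 0 ≤ q) (hq1 : q ≤ 1) :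
    (a + b) ^ q ≤ a ^ q + b ^ q := by
  have h := NNReal.coe_le_coe.2 (NNReal.rpow_add_le_add_rpow a.toNNReal b.toNNReal hq0 hq1)
  rw [NNReal.coe_rpow, NNReal.coe_add, NNReal.coe_add, NNReal.coe_rpow, NNReal.coe_rpow,
    Real.coe_toNNReal _ ha, Real.coe_toNNReal _ hb] at h
  exact h

lemma rpow_sum_le_sum {ι : Type*} (s : Finset ι) (f : ι → ℝ) {p : ℝ} (hp : 1 < p)
    (h0 : ∀ i ∈ s, 0 ≤ f i) : (∑ i ∈ s, f i ^ p) ^ (1/p) ≤ ∑ i ∈ s, f i := by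
  have hp0 : 0 < p := lt_trans one_pos hp
  have hS : 0 ≤ ∑ i ∈ s, f i := Finset.sum_nonneg h0
  have h1 : ∑ i ∈ s, f i ^ p ≤ (∑ i ∈ s, f i) ^ p := by
    calc ∑ i ∈ s, f i ^ p ≤ ∑ i ∈ s, (∑ i ∈ s, f i) ^ (p-1) * f i := by
          refine Finset.sum_le_sum fun i hi => ?_
          have hne : p - 1 + 1 ≠ 0 := by
            intro hcon; apply hp0.ne'; linarith
          have heq : f i ^ (p-1) * f i = f i ^ p := by
            calc f i ^ (p-1) * f i = f i ^ (p-1) * f i ^ (1:ℝ) := by rw [Real.rpow_one]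
              _ = f i ^ (p - 1 + 1) := (Real.rpow_add' (h0 i hi) hne).symm
              _ = f i ^ p := by norm_num
          rw [← heq]
          exact mul_le_mul_of_nonneg_right
            (Real.rpow_le_rpow (h0 i hi) (Finset.single_le_sum h0 hi) (by linarith))
            (by simpa using (h0 i hi))
      _ = (∑ i ∈ s, f i) ^ (p-1) * ∑ i ∈ s, f i := by rw [← Finset.mul_sum]
      _ = (∑ i ∈ s, f i) ^ p := by
          have hne : p - 1 + 1 ≠ 0 := by intro hcon; apply hp0.ne'; linarith
          calc (∑ i ∈ s, f i) ^ (p-1) * ∑ i ∈ s, f i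
              = (∑ i ∈ s, f i) ^ (p-1) * (∑ i ∈ s, f i) ^ (1:ℝ) := by rw [Real.rpow_one]
            _ = (∑ i ∈ s, f i) ^ (p - 1 + 1) := (Real.rpow_add' hS hne).symm
            _ = (∑ i ∈ s, f i) ^ p := by norm_num
  calc (∑ i ∈ s, f i ^ p) ^ (1/p) ≤ ((∑ i ∈ s, f i) ^ p) ^ (1/p) :=
        Real.rpow_le_rpow (Finset.sum_nonneg fun i hi => Real.rpow_nonneg (h0 i hi) p) h1
          (by positivity)
    _ = ∑ i ∈ s, f i := by
        rw [← Real.rpow_mul hS, mul_one_div_cancel hp0.ne', Real.rpow_one]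

lemma jensen_rpow [IsProbabilityMeasure μ] {f : Ω → ℝ} {M p : ℝ} (hp : 1 < p) (hM : 0 ≤ M)
    (hmeas : Measurable f) (h0 : ∀ ω, 0 ≤ f ω) (h1 : ∀ ω, f ω ≤ M) :
    ∫ ω, f ω ^ (1/p) ∂μ ≤ (∫ ω, f ω ∂μ) ^ (1/p) := by
  have hp0 : 0 < p := lt_trans one_pos hp
  set q : ℝ := 1/p with hqdef
  have hq0 : 0 < q := by positivity
  have hq1 : q < 1 := by rw [hqdef, div_lt_one hp0]; linarith
  have hintf : Integrable f μ := bdd_integrable hmeas h0 h1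
  have hintfq : Integrable (fun ω => f ω ^ q) μ :=
    bdd_integrable (meas_rpow hmeas hq0.le) (fun ω => Real.rpow_nonneg (h0 ω) q)
      (fun ω => Real.rpow_le_rpow (h0 ω) (h1 ω) hq0.le)
  set I : ℝ := ∫ ω, f ω ∂μ with hIdef
  have hI0 : 0 ≤ I := integral_nonneg h0
  rcases eq_or_lt_of_le hI0 with hI | hI
  · have hf0 : f =ᵐ[μ] 0 := (integral_eq_zero_iff_of_nonneg h0 hintf).mp hI.symm
    have : (fun ω => f ω ^ q) =ᵐ[μ] 0 := by
      filter_upwards [hf0] with ω hω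
      simp only [Pi.zero_apply] at hω ⊢
      rw [hω, Real.zero_rpow hq0.ne']
    rw [integral_congr_ae this]
    simp [Real.rpow_nonneg hI0]
  · have key : ∀ ω, f ω ^ q ≤ (q * f ω + (1-q) * I) * I ^ (q-1) := by
      intro ω
      have hgm := Real.geom_mean_le_arith_mean2_weighted hq0.le (by linarith : (0:ℝ) ≤ 1 - q)
        (h0 ω) hI0 (by ring)
      have hIq : I ^ (1-q) * I ^ (q-1) = 1 := by
        rw [← Real.rpow_add hI]
        norm_num
      have hstep : f ω ^ q * (I ^ (1-q) * I ^ (q-1)) ≤ (q * f ω + (1-q) * I) * I ^ (q-1) := by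
        rw [← mul_assoc]
        exact mul_le_mul_of_nonneg_right hgm (Real.rpow_nonneg hI0 _)
      rwa [hIq, mul_one] at hstep
    have hintaff : Integrable (fun ω => (q * f ω + (1-q) * I) * I ^ (q-1)) μ := by
      exact (((hintf.const_mul q).add (integrable_const _)).mul_const _)
    calc ∫ ω, f ω ^ q ∂μ ≤ ∫ ω, (q * f ω + (1-q) * I) * I ^ (q-1) ∂μ :=
          integral_mono hintfq hintaff key
      _ = (q * I + (1-q) * I) * I ^ (q-1) := by
          rw [integral_mul_const, integral_add (hintf.const_mul q) (integrable_const _),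
            integral_const_mul, integral_const]
          simp [measure_univ, ← hIdef]
      _ = I ^ q := by
          have : q * I + (1-q) * I = I := by ring
          rw [this]
          calc I * I ^ (q-1) = I ^ (1:ℝ) * I ^ (q-1) := by rw [Real.rpow_one]
            _ = I ^ (1 + (q-1)) := (Real.rpow_add hI 1 (q-1)).symm
            _ = I ^ q := by norm_num



variable {Ω : Type*} [MeasurableSpace Ω] {μ : Measure Ω}

lemma bdd_integrable' [IsFiniteMeasure μ] {f : Ω → ℝ} {M : ℝ}
    (hmeas : Measurable f) (h0 : ∀ ω, 0 ≤ f ω) (h1 : ∀ ω, f ω ≤ M) : Integrable f μ :=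
  ⟨hmeas.aestronglyMeasurable,
    HasFiniteIntegral.of_bounded (C := M)
      (ae_of_all _ fun ω => by rw [Real.norm_eq_abs, abs_of_nonneg (h0 ω)]; exact h1 ω)⟩

lemma integral_le_effSize [IsProbabilityMeasure μ] {f : Ω → ℝ} {M : ℝ}
    (hmeas : Measurable f) (h0 : ∀ ω, 0 ≤ f ω) (h1 : ∀ ω, f ω ≤ M) (ℓ : ℝ) :
    ∫ ω, f ω ∂μ ≤ effSize μ ℓ f := by
  unfold effSize
  split_ifs with hℓ
  · set L := Real.log ℓ with hLdef
    have hL : 0 < L := Real.log_pos hℓ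
    set a := ∫ ω, f ω ∂μ with hadef
    have key : ∀ ω, Real.exp (a*L) + Real.exp (a*L) * (f ω * L - a * L)
        ≤ Real.exp (f ω * L) := by
      intro ω
      have h := Real.add_one_le_exp (f ω * L - a * L)
      have h2 : Real.exp (a*L) * ((f ω * L - a * L) + 1)
          ≤ Real.exp (a*L) * Real.exp (f ω * L - a * L) :=
        mul_le_mul_of_nonneg_left h (Real.exp_pos _).le
      rw [← Real.exp_add] at h2
      calc Real.exp (a*L) + Real.exp (a*L) * (f ω * L - a * L)
          = Real.exp (a*L) * ((f ω * L - a * L) + 1) := by ring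
        _ ≤ Real.exp (a*L + (f ω * L - a*L)) := h2
        _ = Real.exp (f ω * L) := by ring_nf
    have hintexp : Integrable (fun ω => Real.exp (f ω * L)) μ := by
      refine bdd_integrable' ((hmeas.mul_const L).exp) (fun ω => (Real.exp_pos _).le)
        (M := Real.exp (M * L)) (fun ω => Real.exp_le_exp.2 ?_)
      exact mul_le_mul_of_nonneg_right (h1 ω) hL.le
    have hintf : Integrable f μ := bdd_integrable' hmeas h0 h1
    have hintaff : Integrable (fun ω => Real.exp (a*L) + Real.exp (a*L) * (f ω * L - a * L)) μ := by
      have : Integrable (fun ω => f ω * L - a * L) μ := (hintf.mul_const L).sub (integrable_const _)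
      exact (integrable_const _).add (this.const_mul _)
    have hInt : Real.exp (a*L) ≤ ∫ ω, Real.exp (f ω * L) ∂μ := by
      have hmono := integral_mono hintaff hintexp key
      have hleft : ∫ ω, (Real.exp (a*L) + Real.exp (a*L) * (f ω * L - a * L)) ∂μ
          = Real.exp (a*L) := by
        have hre : (fun ω => Real.exp (a*L) + Real.exp (a*L) * (f ω * L - a * L))
            = fun ω => (Real.exp (a*L) * L) * f ω + (Real.exp (a*L) - Real.exp (a*L) * (a*L)) := by
          funext ω; ring
        rw [hre, integral_add (hintf.const_mul _) (integrable_const _), integral_const_mul,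
          integral_const]
        simp only [probReal_univ, measure_univ, ENNReal.toReal_one, one_smul, smul_eq_mul, ← hadef]
        ring
      rwa [hleft] at hmono
    have hpos : (0:ℝ) < ∫ ω, Real.exp (f ω * L) ∂μ := lt_of_lt_of_le (Real.exp_pos _) hInt
    have hlog : a * L ≤ Real.log (∫ ω, Real.exp (f ω * L) ∂μ) := by
      have := Real.log_le_log (Real.exp_pos _) hInt
      rwa [Real.log_exp] at this
    calc a = (1/L) * (a * L) := by field_simp
      _ ≤ (1/L) * Real.log (∫ ω, Real.exp (f ω * L) ∂μ) :=
          mul_le_mul_of_nonneg_left hlog (by positivity)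
  · exact le_refl _


end StmtHelpers

set_option maxHeartbeats 2000000 in
theorem stmt_8 : ∃ α : ℝ, 0 < α ∧
    ∀ (γ K : ℝ), 0 < γ → 0 < K → ∃ C : ℝ, 0 < C ∧
    ∀ (p : ℝ), 1 < p → ∀ (Θ : ℝ), 0 < Θ →
    ∀ (Ω : Type*) (_ : MeasurableSpace Ω) (μ : Measure Ω), IsProbabilityMeasure μ →
    ∀ (m n : ℕ) (X : Fin m × Fin n → Ω → ℝ),
      (∀ ij, Measurable (X ij)) → (∀ ij ω, X ij ω ∈ Set.Icc 0 (α * Θ)) →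
      iIndepFun X μ →
      -- (1) ℓ_p control
      (∃ v : Fin m → ℝ, (∀ i, (1 / α) ^ p ≤ v i) ∧
        (∀ i, (∑ j, min 1 (nu μ p (Θ / v i ^ (1 / p)) (fun ω => X (i, j) ω / 44))) ≤ 10 ∨
          v i = (1 / α) ^ p) ∧
        ∑ i, 1 / v i ≤ 5) →
      -- (2) coarse control
      (∑ ij : Fin m × Fin n, ∫ ω, X ij ω ^ p ∂μ ≤ (K * Θ) ^ p) →
      -- (3) ℓ_∞ control
      (∃ ℓbar : Fin m → ℕ, (∀ i, ℓbar i ∈ Finset.Icc 1 m) ∧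
        (∀ i, ∑ j, effSize μ (ℓbar i : ℝ) (fun ω => X (i, j) ω / Θ) ≤ γ) ∧
        (∀ l ∈ Finset.Icc 1 m, (Finset.univ.filter fun i => ℓbar i = l).card ≤ l)) →
      ∫ ω, (∑ i, (∑ j, X (i, j) ω) ^ p) ^ (1 / p) ∂μ ≤ C * Θ := by
  classical
  refine ⟨1, one_pos, ?_⟩
  intro γ K hγ hK
  refine ⟨5*γ + 10*K + 220*Real.exp 10 + 1, by positivity, ?_⟩
  intro p hp Θ hΘ Ω mΩ μ hμ m n X hXmeas hXmem hXindep h1 h2 h3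
  obtain ⟨v, hv1, hv2, hv3⟩ := h1
  obtain ⟨ℓb, hb1, hb2, hb3⟩ := h3
  have hp0 : 0 < p := lt_trans one_pos hp
  have hq0 : (0:ℝ) < 1/p := by positivity
  have hq1 : 1/p ≤ 1 := by rw [div_le_one hp0]; linarith
  have hX0 : ∀ ij ω, 0 ≤ X ij ω := fun ij ω => (hXmem ij ω).1
  have hXΘ : ∀ ij ω, X ij ω ≤ Θ := fun ij ω => by
    have h := (hXmem ij ω).2; rwa [one_mul] at h
  have hone : ((1:ℝ)/1) ^ p = 1 := by norm_num
  have hv1' : ∀ i, 1 ≤ v i := fun i => by have h := hv1 i; rwa [hone] at h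
  have hvpos : ∀ i, 0 < v i := fun i => lt_of_lt_of_le one_pos (hv1' i)
  -- abbreviations
  obtain ⟨ε, hεdef⟩ : ∃ e : Fin m → ℝ, ∀ i, e i = Θ / v i ^ (1 / p) :=
    ⟨_, fun _ => rfl⟩
  simp only [← hεdef] at hv2
  have hεpos : ∀ i, 0 < ε i := fun i => by
    rw [hεdef i]; exact div_pos hΘ (Real.rpow_pos_of_pos (hvpos i) _)
  have hεp : ∀ i, ε i ^ p = Θ ^ p / v i := by
    intro i
    rw [hεdef i, Real.div_rpow hΘ.le (Real.rpow_nonneg (hvpos i).le _)]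
    congr 1
    rw [← Real.rpow_mul (hvpos i).le, one_div, inv_mul_cancel₀ hp0.ne', Real.rpow_one]
  obtain ⟨NU, hNUdef⟩ : ∃ Nf : Fin m → ℝ,
      ∀ i, Nf i = ∑ j, min 1 (nu μ p (ε i) (fun ω => X (i, j) ω / 44)) :=
    ⟨_, fun _ => rfl⟩
  simp only [← hNUdef] at hv2
  have hv2' : ∀ i, NU i ≤ 10 ∨ v i = 1 := by
    intro i
    rcases hv2 i with h | h
    · exact Or.inl h
    · right; rw [h, hone]
  -- the exceptional set G and its complement Gc
  set G : Finset (Fin m) := Finset.univ.filter (fun i => ¬ (NU i ≤ 10)) with hGdef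
  set Gc : Finset (Fin m) := Finset.univ.filter (fun i => NU i ≤ 10) with hGcdef
  have hGcNU : ∀ i ∈ Gc, NU i ≤ 10 := fun i hi => (Finset.mem_filter.mp hi).2
  have hGv : ∀ i ∈ G, v i = 1 := by
    intro i hi
    exact (hv2' i).resolve_left (Finset.mem_filter.mp hi).2
  have hcardG : (G.card : ℝ) ≤ 5 := by
    have h1' : ∑ i ∈ G, 1 / v i = (G.card : ℝ) := by
      rw [Finset.sum_congr rfl (fun i hi => by rw [hGv i hi, div_one])]
      simp
    rw [← h1']
    refine le_trans (Finset.sum_le_sum_of_subset_of_nonneg (Finset.filter_subset _ _)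
      (fun i _ _ => le_of_lt (div_pos one_pos (hvpos i)))) hv3
  -- basic integrability facts
  have hsum_meas : ∀ (i : Fin m) (F : Finset (Fin n)),
      Measurable (fun ω => ∑ j ∈ F, X (i,j) ω) :=
    fun i F => Finset.measurable_sum F (fun j _ => hXmeas (i,j))
  have hsum_nn : ∀ (i : Fin m) (F : Finset (Fin n)) ω, 0 ≤ ∑ j ∈ F, X (i,j) ω :=
    fun i F ω => Finset.sum_nonneg fun j _ => hX0 _ ω
  have hsum_le : ∀ (i : Fin m) (F : Finset (Fin n)) ω, ∑ j ∈ F, X (i,j) ω ≤ (n:ℝ) * Θ := by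
    intro i F ω
    have hcard : (F.card : ℝ) ≤ (n:ℝ) := by
      have h2' : F.card ≤ n := by simpa using Finset.card_le_univ F
      exact_mod_cast h2'
    calc ∑ j ∈ F, X (i,j) ω ≤ ∑ _j ∈ F, Θ := Finset.sum_le_sum fun j _ => hXΘ _ ω
      _ = (F.card : ℝ) * Θ := by rw [Finset.sum_const, nsmul_eq_mul]
      _ ≤ (n:ℝ) * Θ := mul_le_mul_of_nonneg_right hcard hΘ.le
  have hintS : ∀ (i : Fin m) (F : Finset (Fin n)),
      Integrable (fun ω => ∑ j ∈ F, X (i,j) ω) μ :=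
    fun i F => bdd_integrable (hsum_meas i F) (hsum_nn i F) (hsum_le i F)
  have hintSp : ∀ (i : Fin m) (F : Finset (Fin n)),
      Integrable (fun ω => (∑ j ∈ F, X (i,j) ω) ^ p) μ :=
    fun i F => bdd_integrable (meas_rpow (hsum_meas i F) hp0.le)
      (fun ω => Real.rpow_nonneg (hsum_nn i F ω) p)
      (fun ω => Real.rpow_le_rpow (hsum_nn i F ω) (hsum_le i F ω) hp0.le)
  have hintXp : ∀ ij, Integrable (fun ω => X ij ω ^ p) μ := fun ij =>
    bdd_integrable (meas_rpow (hXmeas ij) hp0.le) (fun ω => Real.rpow_nonneg (hX0 ij ω) p)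
      (fun ω => Real.rpow_le_rpow (hX0 ij ω) (hXΘ ij ω) hp0.le)
  -- mean bound from hypothesis (3)
  have hmean : ∀ i, ∫ ω, (∑ j, X (i,j) ω) ∂μ ≤ γ * Θ := by
    intro i
    have hj : ∀ j : Fin n, ∫ ω, X (i,j) ω / Θ ∂μ
        ≤ effSize μ (ℓb i : ℝ) (fun ω => X (i,j) ω / Θ) := by
      intro j
      refine integral_le_effSize (M := 1) ((hXmeas (i,j)).div_const Θ)
        (fun ω => div_nonneg (hX0 _ ω) hΘ.le)
        (fun ω => by rw [div_le_one hΘ]; exact hXΘ _ ω) _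
    have hsumj : ∑ j, ∫ ω, X (i,j) ω / Θ ∂μ ≤ γ :=
      le_trans (Finset.sum_le_sum fun j _ => hj j) (hb2 i)
    have heq : ∀ j : Fin n, ∫ ω, X (i,j) ω / Θ ∂μ = (∫ ω, X (i,j) ω ∂μ) / Θ :=
      fun j => integral_div Θ _
    have hdiv : (∑ j, ∫ ω, X (i,j) ω ∂μ) / Θ ≤ γ := by
      rw [Finset.sum_div]
      refine le_trans (le_of_eq ?_) hsumj
      exact Finset.sum_congr rfl fun j _ => (heq j).symm
    have hIS : ∫ ω, (∑ j, X (i,j) ω) ∂μ = ∑ j, ∫ ω, X (i,j) ω ∂μ :=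
      integral_finset_sum _ (fun j _ => bdd_integrable (hXmeas (i,j)) (hX0 (i,j)) (hXΘ (i,j)))
    rw [hIS]
    calc ∑ j, ∫ ω, X (i,j) ω ∂μ = ((∑ j, ∫ ω, X (i,j) ω ∂μ) / Θ) * Θ := by field_simp
      _ ≤ γ * Θ := mul_le_mul_of_nonneg_right hdiv hΘ.le
  -- facts about the nu integrands
  have hZmeas : ∀ ij : Fin m × Fin n,
      Measurable (fun ω => (1 + X ij ω / 44 / ε ij.1) ^ p) := fun ij =>
    meas_rpow ((((hXmeas ij).div_const 44).div_const (ε ij.1)).const_add 1) hp0.le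
  have hZ1 : ∀ (ij : Fin m × Fin n) ω, (1:ℝ) ≤ (1 + X ij ω / 44 / ε ij.1) ^ p := by
    intro ij ω
    have hnn : 0 ≤ X ij ω / 44 / ε ij.1 :=
      div_nonneg (div_nonneg (hX0 ij ω) (by norm_num)) (hεpos ij.1).le
    exact Real.one_le_rpow (by linarith) hp0.le
  have hZM : ∀ (ij : Fin m × Fin n) ω,
      (1 + X ij ω / 44 / ε ij.1) ^ p ≤ (1 + Θ / 44 / ε ij.1) ^ p := by
    intro ij ω
    have hnn : 0 ≤ X ij ω / 44 / ε ij.1 :=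
      div_nonneg (div_nonneg (hX0 ij ω) (by norm_num)) (hεpos ij.1).le
    refine Real.rpow_le_rpow (by linarith) ?_ hp0.le
    have : X ij ω / 44 / ε ij.1 ≤ Θ / 44 / ε ij.1 := by
      refine div_le_div_of_nonneg_right ?_ (hεpos ij.1).le
      exact div_le_div_of_nonneg_right (hXΘ ij ω) (by norm_num : (0:ℝ) ≤ 44)
    linarith
  have hZint : ∀ ij : Fin m × Fin n,
      Integrable (fun ω => (1 + X ij ω / 44 / ε ij.1) ^ p) μ := fun ij =>
    bdd_integrable (hZmeas ij) (fun ω => le_trans zero_le_one (hZ1 ij ω)) (hZM ij)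
  have hIone : ∀ ij : Fin m × Fin n, (1:ℝ) ≤ ∫ ω, (1 + X ij ω / 44 / ε ij.1) ^ p ∂μ := by
    intro ij
    calc (1:ℝ) = ∫ _ω, (1:ℝ) ∂μ := by simp
      _ ≤ ∫ ω, (1 + X ij ω / 44 / ε ij.1) ^ p ∂μ :=
        integral_mono (integrable_const _) (hZint ij) (hZ1 ij)
  have hnu_eq : ∀ (i : Fin m) (j : Fin n), nu μ p (ε i) (fun ω => X (i,j) ω / 44)
      = (1/p) * Real.log (∫ ω, (1 + X (i,j) ω / 44 / ε i) ^ p ∂μ) := fun i j => rfl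
  have hnu0 : ∀ (i : Fin m) (j : Fin n), 0 ≤ nu μ p (ε i) (fun ω => X (i,j) ω / 44) := by
    intro i j
    rw [hnu_eq]
    exact mul_nonneg hq0.le (Real.log_nonneg (hIone (i,j)))
  have hexp_nu : ∀ (i : Fin m) (j : Fin n), ∫ ω, (1 + X (i,j) ω / 44 / ε i) ^ p ∂μ
      = Real.exp (p * nu μ p (ε i) (fun ω => X (i,j) ω / 44)) := by
    intro i j
    rw [hnu_eq]
    have harith : p * ((1/p) * Real.log (∫ ω, (1 + X (i,j) ω / 44 / ε i) ^ p ∂μ))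
        = Real.log (∫ ω, (1 + X (i,j) ω / 44 / ε i) ^ p ∂μ) := by
      field_simp
    rw [harith, Real.exp_log (lt_of_lt_of_le one_pos (hIone (i,j)))]
  have hmin0 : ∀ (i : Fin m) (j : Fin n),
      0 ≤ min 1 (nu μ p (ε i) (fun ω => X (i,j) ω / 44)) :=
    fun i j => le_min zero_le_one (hnu0 i j)
  -- the big and small index sets
  obtain ⟨Fb, hFbdef⟩ : ∃ F : Fin m → Finset (Fin n), ∀ i, F i
      = Finset.univ.filter (fun j => 1 < nu μ p (ε i) (fun ω => X (i, j) ω / 44)) :=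
    ⟨_, fun _ => rfl⟩
  obtain ⟨Fs, hFsdef⟩ : ∃ F : Fin m → Finset (Fin n), ∀ i, F i
      = Finset.univ.filter (fun j => ¬ 1 < nu μ p (ε i) (fun ω => X (i, j) ω / 44)) :=
    ⟨_, fun _ => rfl⟩
  have hFbcard : ∀ i ∈ Gc, ((Fb i).card : ℝ) ≤ 10 := by
    intro i hi
    have h1' : ((Fb i).card : ℝ)
        = ∑ j ∈ Fb i, min 1 (nu μ p (ε i) (fun ω => X (i, j) ω / 44)) := by
      rw [Finset.sum_congr rfl (fun j hj => min_eq_left (le_of_lt ?_))]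
      · simp
      · have := Finset.mem_filter.mp (hFbdef i ▸ hj)
        exact this.2
    rw [h1']
    refine le_trans (le_trans ?_ (le_of_eq (hNUdef i).symm)) (hGcNU i hi)
    rw [hFbdef i]
    exact Finset.sum_le_sum_of_subset_of_nonneg (Finset.filter_subset _ _)
      (fun j _ _ => hmin0 i j)
  have hFssum : ∀ i ∈ Gc, ∑ j ∈ Fs i, nu μ p (ε i) (fun ω => X (i, j) ω / 44) ≤ 10 := by
    intro i hi
    have h1' : ∑ j ∈ Fs i, nu μ p (ε i) (fun ω => X (i, j) ω / 44)
        = ∑ j ∈ Fs i, min 1 (nu μ p (ε i) (fun ω => X (i, j) ω / 44)) := by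
      refine Finset.sum_congr rfl (fun j hj => (min_eq_right ?_).symm)
      have := Finset.mem_filter.mp (hFsdef i ▸ hj)
      exact le_of_not_gt this.2
    rw [h1']
    refine le_trans (le_trans ?_ (le_of_eq (hNUdef i).symm)) (hGcNU i hi)
    rw [hFsdef i]
    exact Finset.sum_le_sum_of_subset_of_nonneg (Finset.filter_subset _ _)
      (fun j _ _ => hmin0 i j)
  have hBT : ∀ (i : Fin m) ω, (∑ j, X (i,j) ω) = (∑ j ∈ Fb i, X (i,j) ω) + ∑ j ∈ Fs i, X (i,j) ω := by
    intro i ω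
    rw [hFbdef i, hFsdef i]
    exact (Finset.sum_filter_add_sum_filter_not Finset.univ _ _).symm
  -- independence and product formula
  have hZindep : iIndepFun
      (fun (ij : Fin m × Fin n) => fun ω => (1 + X ij ω / 44 / ε ij.1) ^ p) μ := by
    have hcomp := hXindep.comp (fun ij => fun t : ℝ => (1 + t / 44 / ε ij.1) ^ p)
      (fun ij => meas_rpow (((measurable_id.div_const 44).div_const (ε ij.1)).const_add 1) hp0.le)
    exact hcomp
  have hprod : ∀ s : Finset (Fin m × Fin n),
      ∫ ω, ∏ ij ∈ s, (1 + X ij ω / 44 / ε ij.1) ^ p ∂μ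
      = ∏ ij ∈ s, ∫ ω, (1 + X ij ω / 44 / ε ij.1) ^ p ∂μ :=
    integral_prod_of_indep (M := fun ij => (1 + Θ / 44 / ε ij.1) ^ p)
      hZmeas (fun ij ω => le_trans zero_le_one (hZ1 ij ω)) hZM hZindep
  have hprodrow : ∀ (i : Fin m) (F : Finset (Fin n)),
      ∫ ω, ∏ j ∈ F, (1 + X (i,j) ω / 44 / ε i) ^ p ∂μ
      = ∏ j ∈ F, ∫ ω, (1 + X (i,j) ω / 44 / ε i) ^ p ∂μ := by
    intro i F
    have hemb : Function.Injective (fun j : Fin n => ((i, j) : Fin m × Fin n)) := by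
      intro a b hab
      simpa using hab
    have h := hprod (F.map ⟨fun j => (i,j), hemb⟩)
    simpa [Finset.prod_map] using h
  -- the main estimate for the small parts
  have hTbound : ∀ i ∈ Gc, ∫ ω, (∑ j ∈ Fs i, X (i,j) ω) ^ p ∂μ
      ≤ (44 * Real.exp 10 * ε i) ^ p := by
    intro i hi
    have hεi := hεpos i
    have h44 : (0:ℝ) < 44 * ε i := by positivity
    have hterm : ∀ ω (j : Fin n), 0 ≤ X (i,j) ω / 44 / ε i := fun ω j =>
      div_nonneg (div_nonneg (hX0 _ ω) (by norm_num)) hεi.le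
    have hpt : ∀ ω, (∑ j ∈ Fs i, X (i,j) ω) ^ p
        ≤ (44 * ε i) ^ p * ∏ j ∈ Fs i, (1 + X (i,j) ω / 44 / ε i) ^ p := by
      intro ω
      have hrw : ∑ j ∈ Fs i, X (i,j) ω = 44 * ε i * ∑ j ∈ Fs i, X (i,j) ω / 44 / ε i := by
        rw [Finset.mul_sum]
        refine Finset.sum_congr rfl fun j _ => ?_
        field_simp
      have hsum : ∑ j ∈ Fs i, X (i,j) ω
          ≤ 44 * ε i * ∏ j ∈ Fs i, (1 + X (i,j) ω / 44 / ε i) := by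
        rw [hrw]
        exact mul_le_mul_of_nonneg_left
          (sum_le_prod_one_add _ _ (fun j _ => hterm ω j)) h44.le
      have hprodnn : 0 ≤ ∏ j ∈ Fs i, (1 + X (i,j) ω / 44 / ε i) :=
        Finset.prod_nonneg fun j hj => by linarith [hterm ω j]
      calc (∑ j ∈ Fs i, X (i,j) ω) ^ p
          ≤ (44 * ε i * ∏ j ∈ Fs i, (1 + X (i,j) ω / 44 / ε i)) ^ p :=
            Real.rpow_le_rpow (hsum_nn i (Fs i) ω) hsum hp0.le
        _ = (44 * ε i) ^ p * ∏ j ∈ Fs i, (1 + X (i,j) ω / 44 / ε i) ^ p := by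
            rw [Real.mul_rpow h44.le hprodnn,
              ← Real.finset_prod_rpow _ _ (fun j _ => by linarith [hterm ω j]) p]
    have hintP : Integrable
        (fun ω => (44 * ε i) ^ p * ∏ j ∈ Fs i, (1 + X (i,j) ω / 44 / ε i) ^ p) μ := by
      refine Integrable.const_mul ?_ _
      refine bdd_integrable (Finset.measurable_prod _ (fun j _ => hZmeas (i,j)))
        (fun ω => Finset.prod_nonneg fun j _ => le_trans zero_le_one (hZ1 (i,j) ω))
        (M := ∏ j ∈ Fs i, (1 + Θ / 44 / ε i) ^ p)
        (fun ω => Finset.prod_le_prod (fun j _ => le_trans zero_le_one (hZ1 (i,j) ω))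
          (fun j _ => hZM (i,j) ω))
    calc ∫ ω, (∑ j ∈ Fs i, X (i,j) ω) ^ p ∂μ
        ≤ ∫ ω, (44 * ε i) ^ p * ∏ j ∈ Fs i, (1 + X (i,j) ω / 44 / ε i) ^ p ∂μ :=
          integral_mono (hintSp i (Fs i)) hintP hpt
      _ = (44 * ε i) ^ p * ∏ j ∈ Fs i, ∫ ω, (1 + X (i,j) ω / 44 / ε i) ^ p ∂μ := by
          rw [integral_const_mul, hprodrow i (Fs i)]
      _ ≤ (44 * ε i) ^ p * Real.exp (10 * p) := by
          refine mul_le_mul_of_nonneg_left ?_ (Real.rpow_nonneg h44.le p)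
          calc ∏ j ∈ Fs i, ∫ ω, (1 + X (i,j) ω / 44 / ε i) ^ p ∂μ
              = ∏ j ∈ Fs i, Real.exp (p * nu μ p (ε i) (fun ω => X (i, j) ω / 44)) :=
                Finset.prod_congr rfl fun j _ => hexp_nu i j
            _ = Real.exp (∑ j ∈ Fs i, p * nu μ p (ε i) (fun ω => X (i, j) ω / 44)) :=
                (Real.exp_sum _ _).symm
            _ ≤ Real.exp (10 * p) := by
                rw [Real.exp_le_exp, ← Finset.mul_sum]
                calc p * ∑ j ∈ Fs i, nu μ p (ε i) (fun ω => X (i, j) ω / 44)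
                    ≤ p * 10 := mul_le_mul_of_nonneg_left (hFssum i hi) hp0.le
                  _ = 10 * p := by ring
      _ = (44 * Real.exp 10 * ε i) ^ p := by
          rw [Real.mul_rpow (by positivity : (0:ℝ) ≤ 44 * Real.exp 10) hεi.le,
            Real.mul_rpow (by norm_num : (0:ℝ) ≤ 44) (Real.exp_pos 10).le,
            Real.mul_rpow (by norm_num : (0:ℝ) ≤ 44) hεi.le, ← Real.exp_mul]
          ring
  -- the main estimate for the big parts
  have hBbound : ∀ i ∈ Gc, ∫ ω, (∑ j ∈ Fb i, X (i,j) ω) ^ p ∂μ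
      ≤ (10:ℝ) ^ (p-1) * ∑ j ∈ Fb i, ∫ ω, X (i,j) ω ^ p ∂μ := by
    intro i hi
    have hpt : ∀ ω, (∑ j ∈ Fb i, X (i,j) ω) ^ p
        ≤ (10:ℝ) ^ (p-1) * ∑ j ∈ Fb i, X (i,j) ω ^ p := by
      intro ω
      have h := Real.rpow_sum_le_const_mul_sum_rpow (s := Fb i)
        (f := fun j => X (i,j) ω) hp.le
      have habs : ∀ j : Fin n, |X (i,j) ω| = X (i,j) ω := fun j => abs_of_nonneg (hX0 _ ω)
      simp only [habs] at h
      refine le_trans h ?_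
      refine mul_le_mul_of_nonneg_right
        (Real.rpow_le_rpow (Nat.cast_nonneg _) (hFbcard i hi) (by linarith)) ?_
      exact Finset.sum_nonneg fun j _ => Real.rpow_nonneg (hX0 _ ω) p
    have hintR : Integrable (fun ω => (10:ℝ) ^ (p-1) * ∑ j ∈ Fb i, X (i,j) ω ^ p) μ :=
      Integrable.const_mul (integrable_finset_sum _ (fun j _ => hintXp (i,j))) _
    calc ∫ ω, (∑ j ∈ Fb i, X (i,j) ω) ^ p ∂μ
        ≤ ∫ ω, (10:ℝ) ^ (p-1) * ∑ j ∈ Fb i, X (i,j) ω ^ p ∂μ :=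
          integral_mono (hintSp i (Fb i)) hintR hpt
      _ = (10:ℝ) ^ (p-1) * ∑ j ∈ Fb i, ∫ ω, X (i,j) ω ^ p ∂μ := by
          rw [integral_const_mul, integral_finset_sum _ (fun j _ => hintXp (i,j))]
  -- global bounds on the integrals of the p-th power sums
  have hnnXp : ∀ ij : Fin m × Fin n, 0 ≤ ∫ ω, X ij ω ^ p ∂μ :=
    fun ij => integral_nonneg fun ω => Real.rpow_nonneg (hX0 ij ω) p
  have hIB : ∫ ω, ∑ i ∈ Gc, (∑ j ∈ Fb i, X (i,j) ω) ^ p ∂μ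
      ≤ (10:ℝ) ^ (p-1) * (K * Θ) ^ p := by
    rw [integral_finset_sum _ (fun i _ => hintSp i (Fb i))]
    calc ∑ i ∈ Gc, ∫ ω, (∑ j ∈ Fb i, X (i,j) ω) ^ p ∂μ
        ≤ ∑ i ∈ Gc, (10:ℝ) ^ (p-1) * ∑ j ∈ Fb i, ∫ ω, X (i,j) ω ^ p ∂μ :=
          Finset.sum_le_sum fun i hi => hBbound i hi
      _ = (10:ℝ) ^ (p-1) * ∑ i ∈ Gc, ∑ j ∈ Fb i, ∫ ω, X (i,j) ω ^ p ∂μ := by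
          rw [Finset.mul_sum]
      _ ≤ (10:ℝ) ^ (p-1) * (K * Θ) ^ p := by
          refine mul_le_mul_of_nonneg_left ?_ (Real.rpow_nonneg (by norm_num) _)
          refine le_trans ?_ h2
          calc ∑ i ∈ Gc, ∑ j ∈ Fb i, ∫ ω, X (i,j) ω ^ p ∂μ
              ≤ ∑ i ∈ Gc, ∑ j : Fin n, ∫ ω, X (i,j) ω ^ p ∂μ :=
                Finset.sum_le_sum fun i _ =>
                  Finset.sum_le_sum_of_subset_of_nonneg
                    (by rw [hFbdef i]; exact Finset.filter_subset _ _)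
                    (fun j _ _ => hnnXp (i,j))
            _ ≤ ∑ i : Fin m, ∑ j : Fin n, ∫ ω, X (i,j) ω ^ p ∂μ :=
                Finset.sum_le_sum_of_subset_of_nonneg (Finset.filter_subset _ _)
                  (fun i _ _ => Finset.sum_nonneg fun j _ => hnnXp (i,j))
            _ = ∑ ij : Fin m × Fin n, ∫ ω, X ij ω ^ p ∂μ :=
                (Fintype.sum_prod_type (f := fun ij : Fin m × Fin n => ∫ ω, X ij ω ^ p ∂μ)).symm
  have hIT : ∫ ω, ∑ i ∈ Gc, (∑ j ∈ Fs i, X (i,j) ω) ^ p ∂μ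
      ≤ (44 * Real.exp 10 * Θ) ^ p * 5 := by
    rw [integral_finset_sum _ (fun i _ => hintSp i (Fs i))]
    have hterm : ∀ i, (44 * Real.exp 10 * ε i) ^ p
        = (44 * Real.exp 10 * Θ) ^ p * (1 / v i) := by
      intro i
      have hA : (0:ℝ) ≤ 44 * Real.exp 10 := by positivity
      rw [Real.mul_rpow hA (hεpos i).le, Real.mul_rpow hA hΘ.le, hεp i]
      field_simp
    calc ∑ i ∈ Gc, ∫ ω, (∑ j ∈ Fs i, X (i,j) ω) ^ p ∂μ
        ≤ ∑ i ∈ Gc, (44 * Real.exp 10 * ε i) ^ p :=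
          Finset.sum_le_sum fun i hi => hTbound i hi
      _ = (44 * Real.exp 10 * Θ) ^ p * ∑ i ∈ Gc, 1 / v i := by
          rw [Finset.mul_sum]
          exact Finset.sum_congr rfl fun i _ => hterm i
      _ ≤ (44 * Real.exp 10 * Θ) ^ p * 5 := by
          refine mul_le_mul_of_nonneg_left ?_ (Real.rpow_nonneg (by positivity) _)
          refine le_trans (Finset.sum_le_sum_of_subset_of_nonneg (Finset.filter_subset _ _)
            (fun i _ _ => le_of_lt (div_pos one_pos (hvpos i)))) hv3
  -- integral of the G part
  have hIG : ∫ ω, ∑ i ∈ G, (∑ j, X (i,j) ω) ∂μ ≤ 5 * (γ * Θ) := by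
    rw [integral_finset_sum _ (fun i _ => hintS i Finset.univ)]
    calc ∑ i ∈ G, ∫ ω, (∑ j, X (i,j) ω) ∂μ ≤ ∑ _i ∈ G, γ * Θ :=
          Finset.sum_le_sum fun i _ => hmean i
      _ = (G.card : ℝ) * (γ * Θ) := by rw [Finset.sum_const, nsmul_eq_mul]
      _ ≤ 5 * (γ * Θ) := mul_le_mul_of_nonneg_right hcardG (by positivity)
  -- Jensen for the two Gc parts
  have hMtot : (0:ℝ) ≤ (m:ℝ) * ((n:ℝ) * Θ) ^ p := by positivity
  have hsum_bdd : ∀ (Fm : Fin m → Finset (Fin n)) (s : Finset (Fin m)) ω,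
      ∑ i ∈ s, (∑ j ∈ Fm i, X (i,j) ω) ^ p ≤ (m:ℝ) * ((n:ℝ) * Θ) ^ p := by
    intro Fm s ω
    have hcard : (s.card : ℝ) ≤ (m:ℝ) := by
      have h2' : s.card ≤ m := by simpa using Finset.card_le_univ s
      exact_mod_cast h2'
    calc ∑ i ∈ s, (∑ j ∈ Fm i, X (i,j) ω) ^ p
        ≤ ∑ _i ∈ s, ((n:ℝ) * Θ) ^ p := Finset.sum_le_sum fun i _ =>
          Real.rpow_le_rpow (hsum_nn i (Fm i) ω) (hsum_le i (Fm i) ω) hp0.le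
      _ = (s.card : ℝ) * ((n:ℝ) * Θ) ^ p := by rw [Finset.sum_const, nsmul_eq_mul]
      _ ≤ (m:ℝ) * ((n:ℝ) * Θ) ^ p :=
          mul_le_mul_of_nonneg_right hcard (Real.rpow_nonneg (by positivity) _)
  have hsum_measp : ∀ (Fm : Fin m → Finset (Fin n)) (s : Finset (Fin m)),
      Measurable (fun ω => ∑ i ∈ s, (∑ j ∈ Fm i, X (i,j) ω) ^ p) :=
    fun Fm s => Finset.measurable_sum s fun i _ => meas_rpow (hsum_meas i (Fm i)) hp0.le
  have hsum_nnp : ∀ (Fm : Fin m → Finset (Fin n)) (s : Finset (Fin m)) ω,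
      0 ≤ ∑ i ∈ s, (∑ j ∈ Fm i, X (i,j) ω) ^ p :=
    fun Fm s ω => Finset.sum_nonneg fun i _ => Real.rpow_nonneg (hsum_nn i (Fm i) ω) p
  have hJB : ∫ ω, (∑ i ∈ Gc, (∑ j ∈ Fb i, X (i,j) ω) ^ p) ^ (1/p) ∂μ
      ≤ ((10:ℝ) ^ (p-1) * (K * Θ) ^ p) ^ (1/p) :=
    le_trans (jensen_rpow hp hMtot (hsum_measp Fb Gc) (hsum_nnp Fb Gc) (hsum_bdd Fb Gc))
      (Real.rpow_le_rpow (integral_nonneg (hsum_nnp Fb Gc)) hIB hq0.le)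
  have hJT : ∫ ω, (∑ i ∈ Gc, (∑ j ∈ Fs i, X (i,j) ω) ^ p) ^ (1/p) ∂μ
      ≤ ((44 * Real.exp 10 * Θ) ^ p * 5) ^ (1/p) :=
    le_trans (jensen_rpow hp hMtot (hsum_measp Fs Gc) (hsum_nnp Fs Gc) (hsum_bdd Fs Gc))
      (Real.rpow_le_rpow (integral_nonneg (hsum_nnp Fs Gc)) hIT hq0.le)
  -- numerical simplifications
  have hfinB : ((10:ℝ) ^ (p-1) * (K * Θ) ^ p) ^ (1/p) ≤ 10 * (K * Θ) := by
    have hKΘ : (0:ℝ) ≤ K * Θ := by positivity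
    rw [Real.mul_rpow (Real.rpow_nonneg (by norm_num) _) (Real.rpow_nonneg hKΘ _)]
    have h1' : ((10:ℝ) ^ (p-1)) ^ (1/p) ≤ 10 := by
      rw [← Real.rpow_mul (by norm_num : (0:ℝ) ≤ 10)]
      calc (10:ℝ) ^ ((p-1) * (1/p)) ≤ 10 ^ (1:ℝ) := by
            refine Real.rpow_le_rpow_of_exponent_le (by norm_num) ?_
            rw [mul_one_div, div_le_one hp0]
            linarith
        _ = 10 := Real.rpow_one 10
    have h2' : ((K * Θ) ^ p) ^ (1/p) = K * Θ := by
      rw [← Real.rpow_mul hKΘ, mul_one_div_cancel hp0.ne', Real.rpow_one]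
    rw [h2']
    exact mul_le_mul_of_nonneg_right h1' hKΘ
  have hfinT : ((44 * Real.exp 10 * Θ) ^ p * 5) ^ (1/p) ≤ 220 * Real.exp 10 * Θ := by
    have hA : (0:ℝ) ≤ 44 * Real.exp 10 * Θ := by positivity
    rw [Real.mul_rpow (Real.rpow_nonneg hA _) (by norm_num : (0:ℝ) ≤ 5),
      ← Real.rpow_mul hA, mul_one_div_cancel hp0.ne', Real.rpow_one]
    have h5 : (5:ℝ) ^ (1/p) ≤ 5 := by
      calc (5:ℝ) ^ (1/p) ≤ 5 ^ (1:ℝ) :=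
            Real.rpow_le_rpow_of_exponent_le (by norm_num) hq1
        _ = 5 := Real.rpow_one 5
    calc (44 * Real.exp 10 * Θ) * (5:ℝ) ^ (1/p) ≤ (44 * Real.exp 10 * Θ) * 5 :=
          mul_le_mul_of_nonneg_left h5 hA
      _ = 220 * Real.exp 10 * Θ := by ring
  -- the pointwise master inequality
  have hmaster : ∀ ω, (∑ i, (∑ j, X (i,j) ω) ^ p) ^ (1/p)
      ≤ (∑ i ∈ Gc, (∑ j ∈ Fb i, X (i,j) ω) ^ p) ^ (1/p)
        + (∑ i ∈ Gc, (∑ j ∈ Fs i, X (i,j) ω) ^ p) ^ (1/p)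
        + ∑ i ∈ G, (∑ j, X (i,j) ω) := by
    intro ω
    have hsplit : ∑ i, (∑ j, X (i,j) ω) ^ p
        = ∑ i ∈ Gc, (∑ j, X (i,j) ω) ^ p + ∑ i ∈ G, (∑ j, X (i,j) ω) ^ p := by
      rw [hGcdef, hGdef]
      exact (Finset.sum_filter_add_sum_filter_not Finset.univ _ _).symm
    have h5' : (∑ i, (∑ j, X (i,j) ω) ^ p) ^ (1/p)
        ≤ (∑ i ∈ Gc, (∑ j, X (i,j) ω) ^ p) ^ (1/p)
          + (∑ i ∈ G, (∑ j, X (i,j) ω) ^ p) ^ (1/p) := by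
      rw [hsplit]
      exact real_rpow_add_le (hsum_nnp (fun _ => Finset.univ) Gc ω)
        (hsum_nnp (fun _ => Finset.univ) G ω) hq0.le hq1
    have hGterm : (∑ i ∈ G, (∑ j, X (i,j) ω) ^ p) ^ (1/p) ≤ ∑ i ∈ G, (∑ j, X (i,j) ω) :=
      rpow_sum_le_sum G _ hp (fun i _ => hsum_nn i Finset.univ ω)
    have hGcterm : (∑ i ∈ Gc, (∑ j, X (i,j) ω) ^ p) ^ (1/p)
        ≤ (∑ i ∈ Gc, (∑ j ∈ Fb i, X (i,j) ω) ^ p) ^ (1/p)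
          + (∑ i ∈ Gc, (∑ j ∈ Fs i, X (i,j) ω) ^ p) ^ (1/p) := by
      have hmink := Real.Lp_add_le_of_nonneg (s := Gc)
        (f := fun i => ∑ j ∈ Fb i, X (i,j) ω) (g := fun i => ∑ j ∈ Fs i, X (i,j) ω)
        hp.le (fun i _ => hsum_nn i (Fb i) ω) (fun i _ => hsum_nn i (Fs i) ω)
      refine le_trans (le_of_eq ?_) hmink
      congr 1
      exact Finset.sum_congr rfl fun i _ => by rw [hBT i ω]
    linarith [h5', hGterm, hGcterm]
  -- integrability of both sides of the master inequality
  have hintLHS : Integrable (fun ω => (∑ i, (∑ j, X (i,j) ω) ^ p) ^ (1/p)) μ := by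
    refine bdd_integrable (meas_rpow (hsum_measp (fun _ => Finset.univ) Finset.univ) hq0.le)
      (fun ω => Real.rpow_nonneg (hsum_nnp (fun _ => Finset.univ) Finset.univ ω) _)
      (M := ((m:ℝ) * ((n:ℝ) * Θ) ^ p) ^ (1/p))
      (fun ω => Real.rpow_le_rpow (hsum_nnp (fun _ => Finset.univ) Finset.univ ω)
        (hsum_bdd (fun _ => Finset.univ) Finset.univ ω) hq0.le)
  have hintB : Integrable (fun ω => (∑ i ∈ Gc, (∑ j ∈ Fb i, X (i,j) ω) ^ p) ^ (1/p)) μ :=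
    bdd_integrable (meas_rpow (hsum_measp Fb Gc) hq0.le)
      (fun ω => Real.rpow_nonneg (hsum_nnp Fb Gc ω) _)
      (M := ((m:ℝ) * ((n:ℝ) * Θ) ^ p) ^ (1/p))
      (fun ω => Real.rpow_le_rpow (hsum_nnp Fb Gc ω) (hsum_bdd Fb Gc ω) hq0.le)
  have hintT : Integrable (fun ω => (∑ i ∈ Gc, (∑ j ∈ Fs i, X (i,j) ω) ^ p) ^ (1/p)) μ :=
    bdd_integrable (meas_rpow (hsum_measp Fs Gc) hq0.le)
      (fun ω => Real.rpow_nonneg (hsum_nnp Fs Gc ω) _)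
      (M := ((m:ℝ) * ((n:ℝ) * Θ) ^ p) ^ (1/p))
      (fun ω => Real.rpow_le_rpow (hsum_nnp Fs Gc ω) (hsum_bdd Fs Gc ω) hq0.le)
  have hintG : Integrable (fun ω => ∑ i ∈ G, (∑ j, X (i,j) ω)) μ :=
    integrable_finset_sum _ (fun i _ => hintS i Finset.univ)
  -- final calculation
  calc ∫ ω, (∑ i, (∑ j, X (i, j) ω) ^ p) ^ (1 / p) ∂μ
      ≤ ∫ ω, ((∑ i ∈ Gc, (∑ j ∈ Fb i, X (i,j) ω) ^ p) ^ (1/p)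
          + (∑ i ∈ Gc, (∑ j ∈ Fs i, X (i,j) ω) ^ p) ^ (1/p)
          + ∑ i ∈ G, (∑ j, X (i,j) ω)) ∂μ :=
        integral_mono hintLHS ((hintB.add hintT).add hintG) hmaster
    _ = (∫ ω, (∑ i ∈ Gc, (∑ j ∈ Fb i, X (i,j) ω) ^ p) ^ (1/p) ∂μ)
        + (∫ ω, (∑ i ∈ Gc, (∑ j ∈ Fs i, X (i,j) ω) ^ p) ^ (1/p) ∂μ)
        + ∫ ω, ∑ i ∈ G, (∑ j, X (i,j) ω) ∂μ := by
        have hi12 : Integrable (fun ω => (∑ i ∈ Gc, (∑ j ∈ Fb i, X (i,j) ω) ^ p) ^ (1/p)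
            + (∑ i ∈ Gc, (∑ j ∈ Fs i, X (i,j) ω) ^ p) ^ (1/p)) μ := hintB.add hintT
        rw [integral_add hi12 hintG, integral_add hintB hintT]
    _ ≤ 10 * (K * Θ) + 220 * Real.exp 10 * Θ + 5 * (γ * Θ) := by
        have e1 := le_trans hJB hfinB
        have e2 := le_trans hJT hfinT
        have e3 := hIG
        linarith
    _ ≤ (5*γ + 10*K + 220*Real.exp 10 + 1) * Θ := by nlinarith [hΘ.le]
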